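/- Let u_max > 0 and α ≥ 1 be real constants, let the four normals be n₁ = e₁ = (1,0), n₂ = e₂ = (0,1), n₃ = −e₁, n₄ = −e₂ with offsets b₁, b₂, b₃, b₄ ∈ ℝ. Let p : ℝ → ℝ² be twice differentiable with v = p' and u = v', and define g_k(t) = (⟪p(t), n_k⟫ + b_k) + α⟪v(t), n_k⟫²/(2 u_max) for k = 1,…,4. Suppose g_k(t₀) ≤ 0 for all k, and suppose for all t ≥ t₀ and all k, ⟪v(t), n_k⟫ · (1 + (α/u_max) · ⟪u(t), n_k⟫) ≤ 0. Then for all t ≥ t₀ and all k, g_k(t) ≤ 0; in particular ⟪p(t), n_k⟫ + b_k ≤ 0 for all k, i.e., the position p(t) remains in the rectangular domain for all t ≥ t₀. -/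

import Mathlib

open scoped RealInnerProductSpace

noncomputable def e1 : EuclideanSpace ℝ (Fin 2) := EuclideanSpace.single 0 1
noncomputable def e2 : EuclideanSpace ℝ (Fin 2) := EuclideanSpace.single 1 1

/-- The four outward wall normals of the axis-aligned rectangular domain. -/
noncomputable def walls : Fin 4 → EuclideanSpace ℝ (Fin 2) := ![e1, e2, -e1, -e2]

/-- Forward-invariance content of Theorem 1: a trajectory that initially satisfies
the stopping-distance constraints `g_k ≤ 0` of the four walls, and whose control
keeps each `g_k` nonincreasing (i.e. `⟪v, n_k⟫(1 + (α/u_max)⟪u, n_k⟫) ≤ 0`),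
satisfies `g_k ≤ 0` — and in particular stays inside the rectangle — for all
future time. -/
theorem stmt_4 (umax α : ℝ) (humax : 0 < umax) (hα : 1 ≤ α)
    (b : Fin 4 → ℝ)
    (p v u : ℝ → EuclideanSpace ℝ (Fin 2))
    (hp : ∀ t, HasDerivAt p (v t) t)
    (hv : ∀ t, HasDerivAt v (u t) t)
    (t₀ : ℝ)
    (h0 : ∀ k : Fin 4,
      (⟪p t₀, walls k⟫ + b k) + α * ⟪v t₀, walls k⟫ ^ 2 / (2 * umax) ≤ 0)
    (hder : ∀ t ≥ t₀, ∀ k : Fin 4,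
      ⟪v t, walls k⟫ * (1 + α / umax * ⟪u t, walls k⟫) ≤ 0) :
    ∀ t ≥ t₀, ∀ k : Fin 4,
      (⟪p t, walls k⟫ + b k) + α * ⟪v t, walls k⟫ ^ 2 / (2 * umax) ≤ 0 ∧
      ⟪p t, walls k⟫ + b k ≤ 0 := by
  intro t ht k
  set g : ℝ → ℝ := fun t => (⟪p t, walls k⟫ + b k) + α * ⟪v t, walls k⟫ ^ 2 / (2 * umax)
    with hgdef
  have hg : ∀ s, HasDerivAt g (⟪v s, walls k⟫ * (1 + α / umax * ⟪u s, walls k⟫)) s := by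
    intro s
    have h1 : HasDerivAt (fun t => ⟪p t, walls k⟫) (⟪v s, walls k⟫) s := by
      simpa using (hp s).inner ℝ (hasDerivAt_const s (walls k))
    have h2 : HasDerivAt (fun t => ⟪v t, walls k⟫) (⟪u s, walls k⟫) s := by
      simpa using (hv s).inner ℝ (hasDerivAt_const s (walls k))
    have h3 := ((h1.add_const (b k)).add
      (((h2.pow 2).const_mul α).div_const (2 * umax)))
    refine h3.congr_deriv ?_
    have humax' : umax ≠ 0 := humax.ne'
    field_simp
    ring
  have hanti : AntitoneOn g (Set.Ici t₀) := by
    apply antitoneOn_of_deriv_nonpos (convex_Ici t₀)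
    · exact fun x _ => (hg x).continuousAt.continuousWithinAt
    · intro x hx
      exact (hg x).differentiableAt.differentiableWithinAt
    · intro x hx
      rw [(hg x).deriv]
      exact hder x (le_of_lt (by simpa using hx)) k
  have hgt : g t ≤ 0 := le_trans (hanti (Set.self_mem_Ici) ht ht) (h0 k)
  have hsq : 0 ≤ α * ⟪v t, walls k⟫ ^ 2 / (2 * umax) := by positivity
  have hgt' : ⟪p t, walls k⟫ + b k + α * ⟪v t, walls k⟫ ^ 2 / (2 * umax) ≤ 0 := hgt
  exact ⟨hgt, by linarith [hgt', hsq]⟩
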